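/- Define b̆_n(i) for n ≥ 0 and i ≥ 0 by: b̆_0(i) = 1, b̆_1(i) = 2i+1, and b̆_n(i) = b̆_{n−1}(i) + 2·Σ_{j=0}^{i−1} b̆_{n−1}(j) for n ≥ 2. Then the double generating function satisfies the formal power series identity Σ_{n≥0} Σ_{i≥0} b̆_n(i) u^n v^i = Σ_{n≥0} u^n (1+v)^n / (1−v)^{n+1} = 1 / (1 − u − v − uv). -/

import Mathlib

/-- The recursively defined bounds `b̆_n(i)` of the cup-length case:
`b̆_0(i) = 1`, `b̆_1(i) = 2 i + 1`, and
`b̆_n(i) = b̆_{n-1}(i) + 2 ∑_{j < i} b̆_{n-1}(j)` for `n ≥ 2`. -/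
def bcup : ℕ → ℕ → ℕ
  | 0, _ => 1
  | 1, i => 2 * i + 1
  | n + 2, i => bcup (n + 1) i + 2 * ∑ j ∈ Finset.range i, bcup (n + 1) j

/-- The double generating function `∑_{n,i} b̆_n(i) uⁿ vⁱ` as a formal power series in
two variables `u = X 0`, `v = X 1`. -/
def bcupGF : MvPowerSeries (Fin 2) ℤ :=
  fun d => (bcup (d 0) (d 1) : ℤ)

lemma bcup_zero_right : ∀ n, bcup n 0 = 1
  | 0 => rfl
  | 1 => rfl
  | n + 2 => by simp [bcup, bcup_zero_right (n+1)]

lemma bcup_key (n i : ℕ) :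
    bcup (n + 1) (i + 1) = bcup (n + 1) i + bcup n (i + 1) + bcup n i := by
  cases n with
  | zero => simp [bcup]; ring
  | succ k => simp [bcup, Finset.sum_range_succ]; ring

lemma bcup_step (n : ℕ) :
    (PowerSeries.mk fun i => (bcup (n+1) i : ℤ)) * (1 - PowerSeries.X) =
      (PowerSeries.mk fun i => (bcup n i : ℤ)) * (1 + PowerSeries.X) := by
  ext i
  simp only [mul_sub, mul_add, mul_one, map_sub, map_add]
  cases i with
  | zero => simp [PowerSeries.coeff_zero_mul_X, bcup_zero_right]
  | succ k =>
      simp only [PowerSeries.coeff_succ_mul_X, PowerSeries.coeff_mk]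
      have := bcup_key n k
      push_cast [this]
      ring

lemma bcup_base : (PowerSeries.mk fun i => (bcup 0 i : ℤ)) * (1 - PowerSeries.X) = 1 := by
  ext i
  simp only [mul_sub, mul_one, map_sub]
  cases i with
  | zero => simp [PowerSeries.coeff_zero_mul_X, bcup]
  | succ k => simp [PowerSeries.coeff_succ_mul_X, bcup]

lemma bcup_part1 (n : ℕ) :
    (PowerSeries.mk fun i => (bcup n i : ℤ)) * (1 - PowerSeries.X) ^ (n + 1) =
      (1 + PowerSeries.X) ^ n := by
  induction n with
  | zero => simpa using bcup_base
  | succ k ih =>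
      calc (PowerSeries.mk fun i => (bcup (k+1) i : ℤ)) * (1 - PowerSeries.X) ^ (k + 2)
          = ((PowerSeries.mk fun i => (bcup (k+1) i : ℤ)) * (1 - PowerSeries.X)) *
              (1 - PowerSeries.X) ^ (k + 1) := by ring
        _ = ((PowerSeries.mk fun i => (bcup k i : ℤ)) * (1 - PowerSeries.X) ^ (k+1)) *
              (1 + PowerSeries.X) := by rw [bcup_step]; ring
        _ = (1 + PowerSeries.X) ^ (k + 1) := by rw [ih]; ring

lemma bcup_part2 :
    bcupGF * (1 - MvPowerSeries.X (0 : Fin 2) - MvPowerSeries.X 1 -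
        MvPowerSeries.X 0 * MvPowerSeries.X 1) = 1 := by
  classical
  ext d
  have hXX : (MvPowerSeries.X (0:Fin 2) * MvPowerSeries.X 1 : MvPowerSeries (Fin 2) ℤ)
      = MvPowerSeries.monomial (Finsupp.single (0:Fin 2) 1 + Finsupp.single 1 1) (1:ℤ) := by
    rw [MvPowerSeries.X_def, MvPowerSeries.X_def, MvPowerSeries.monomial_mul_monomial, one_mul]
  rw [mul_sub, mul_sub, mul_sub, mul_one, map_sub, map_sub, map_sub, hXX,
    MvPowerSeries.X_def, MvPowerSeries.X_def,
    MvPowerSeries.coeff_mul_monomial, MvPowerSeries.coeff_mul_monomial,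
    MvPowerSeries.coeff_mul_monomial, MvPowerSeries.coeff_one]
  have h0 : (Finsupp.single (0:Fin 2) 1 ≤ d) ↔ 1 ≤ d 0 := Finsupp.single_le_iff
  have h1 : (Finsupp.single (1:Fin 2) 1 ≤ d) ↔ 1 ≤ d 1 := Finsupp.single_le_iff
  have h01 : (Finsupp.single (0:Fin 2) 1 + Finsupp.single 1 1 ≤ d) ↔ 1 ≤ d 0 ∧ 1 ≤ d 1 := by
    rw [Finsupp.le_def]
    constructor
    · intro h
      exact ⟨by simpa using h 0, by simpa using h 1⟩
    · rintro ⟨ha, hb⟩ s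
      fin_cases s <;> simp_all [Finsupp.single_apply]
  have hd0 : d = 0 ↔ d 0 = 0 ∧ d 1 = 0 := by
    constructor
    · rintro rfl; simp
    · rintro ⟨ha, hb⟩; ext s; fin_cases s <;> simp_all
  have c0 : ∀ e : Fin 2 →₀ ℕ, MvPowerSeries.coeff e bcupGF = (bcup (e 0) (e 1) : ℤ) :=
    fun e => rfl
  have e0 : ((d - Finsupp.single (0:Fin 2) 1 : Fin 2 →₀ ℕ)) 0 = d 0 - 1 := by
    simp [Finsupp.sub_apply]
  have e0' : ((d - Finsupp.single (0:Fin 2) 1 : Fin 2 →₀ ℕ)) 1 = d 1 := by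
    simp [Finsupp.sub_apply, Finsupp.single_apply]
  have e1 : ((d - Finsupp.single (1:Fin 2) 1 : Fin 2 →₀ ℕ)) 0 = d 0 := by
    simp [Finsupp.sub_apply, Finsupp.single_apply]
  have e1' : ((d - Finsupp.single (1:Fin 2) 1 : Fin 2 →₀ ℕ)) 1 = d 1 - 1 := by
    simp [Finsupp.sub_apply]
  have e01 : ((d - (Finsupp.single (0:Fin 2) 1 + Finsupp.single 1 1) : Fin 2 →₀ ℕ)) 0
      = d 0 - 1 := by
    simp [Finsupp.sub_apply, Finsupp.single_apply]
  have e01' : ((d - (Finsupp.single (0:Fin 2) 1 + Finsupp.single 1 1) : Fin 2 →₀ ℕ)) 1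
      = d 1 - 1 := by
    simp [Finsupp.sub_apply, Finsupp.single_apply]
  rw [c0, c0, c0, c0, e0, e0', e1, e1', e01, e01']
  simp only [h0, h1, h01, hd0, mul_one]
  rcases hA : d 0 with _ | a <;> rcases hB : d 1 with _ | b <;>
    simp [bcup_zero_right, bcup]
  · have := bcup_key a b
    push_cast [this]
    ring

/-- **Remark (generating function identity).**
`∑_{n,i} b̆_n(i) uⁿ vⁱ = ∑_n uⁿ (1+v)ⁿ/(1-v)^{n+1} = 1/(1 - u - v - uv)` as formal
power series.  The first equality is stated coefficientwise in `u`: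
`(∑_i b̆_n(i) vⁱ) (1-v)^{n+1} = (1+v)ⁿ` for every `n`; the second as
`(∑_{n,i} b̆_n(i) uⁿ vⁱ) (1 - u - v - uv) = 1`. -/
theorem bcup_generating_function :
    (∀ n : ℕ,
      (PowerSeries.mk fun i => (bcup n i : ℤ)) * (1 - PowerSeries.X) ^ (n + 1) =
        (1 + PowerSeries.X) ^ n) ∧
    bcupGF * (1 - MvPowerSeries.X (0 : Fin 2) - MvPowerSeries.X 1 -
        MvPowerSeries.X 0 * MvPowerSeries.X 1) = 1 := by
  exact ⟨bcup_part1, bcup_part2⟩
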